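/- Fix k ≥ 1 and nonincreasing integers N_{1,1} ≥ ... ≥ N_{1,k} ≥ 0 with N_{1,k+1} := 0. For binary k-tuples define l^1_p(q) = q^{∑ p_i N_{1,i}} and δ^1_p(q) = ∏_{i=1}^k (1 - [p_i=0, p_{i+1}=1] q^{N_{1,i}-N_{1,i+1}}) with p_{k+1} := 0. Let p' ∈ {0,1}^k have exactly s+1 ones with p'_k = 1, and let p be obtained from p' by setting the last coordinate to 0. Let the equivalence class of p' consist of all p'' with s+1 ones such that pos_{1,i}(p'') = pos_{1,i}(p') for i = 1,...,s. Then ∑_{p'' in the class of p'} l^1_{p''}(q) δ^1_{p''}(q) = l^1_p(q) δ^1_p(q) · q^{N_{1,k}}. -/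
import Mathlib


open Finset Polynomial

/-- Value of a binary `k`-tuple at 1-based position `i`, with value `0` outside `1..k`
(encoding the conventions `p₀ = 0` and `p_{k+1} = 0`). -/
def ext' (k : ℕ) (p : Fin k → Fin 2) (i : ℕ) : ℕ :=
  if h : 1 ≤ i ∧ i ≤ k then (p ⟨i - 1, by omega⟩ : ℕ) else 0

/-- Number of ones of a binary tuple. -/
def onesCount (k : ℕ) (p : Fin k → Fin 2) : ℕ := ∑ i : Fin k, (p i : ℕ)

/-- The partial order: `p1 ≤ p2` iff every initial partial sum of `p1` is ≥ that of `p2`. -/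
def tle (k : ℕ) (p1 p2 : Fin k → Fin 2) : Prop :=
  ∀ j ∈ Finset.Icc 1 k,
    ∑ i ∈ Finset.Icc 1 j, ext' k p2 i ≤ ∑ i ∈ Finset.Icc 1 j, ext' k p1 i

instance (k : ℕ) (p1 p2 : Fin k → Fin 2) : Decidable (tle k p1 p2) := by
  unfold tle; infer_instance

/-- `l_p(q) = q^{∑ p_i N_i}` as a polynomial in `q = X` over `ℤ`. -/
noncomputable def lTerm (k : ℕ) (N : ℕ → ℕ) (p : Fin k → Fin 2) : Polynomial ℤ :=
  Polynomial.X ^ (∑ i ∈ Finset.Icc 1 k, ext' k p i * N i)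

/-- `δ¹_p(q)`: factors read from the right neighbour, convention `p_{k+1} = 0`. -/
noncomputable def deltaR (k : ℕ) (N : ℕ → ℕ) (p : Fin k → Fin 2) : Polynomial ℤ :=
  ∏ i ∈ Finset.Icc 1 k,
    (1 - if ext' k p i = 0 ∧ ext' k p (i + 1) = 1
         then Polynomial.X ^ (N i - N (i + 1)) else 0)

/-- `δ²_p(q)`: factors read from the left neighbour, conventions `p₀ = 0`, `N₀ = 0`. -/
noncomputable def deltaL (k : ℕ) (N : ℕ → ℕ) (p : Fin k → Fin 2) : Polynomial ℤ :=
  ∏ i ∈ Finset.Icc 1 k,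
    (1 - if ext' k p i = 0 ∧ ext' k p (i - 1) = 1
         then Polynomial.X ^ (N i - N (i - 1)) else 0)

/-- `g_i^1(p)`: change the last `i` ones of `p` (largest positions) into zeros. -/
def g1 (k i : ℕ) (p : Fin k → Fin 2) : Fin k → Fin 2 := fun m =>
  if p m = 1 ∧ (Finset.univ.filter (fun n => m ≤ n ∧ p n = 1)).card ≤ i then 0 else p m

/-- `g_i^0(p)`: change the last `i` zeros of `p` (largest positions) into ones. -/
def g0 (k i : ℕ) (p : Fin k → Fin 2) : Fin k → Fin 2 := fun m =>
  if p m = 0 ∧ (Finset.univ.filter (fun n => m ≤ n ∧ p n = 0)).card ≤ i then 1 else p m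

/-- `f_i^1(p)`: change the first `i` ones of `p` (smallest positions) into zeros. -/
def f1 (k i : ℕ) (p : Fin k → Fin 2) : Fin k → Fin 2 := fun m =>
  if p m = 1 ∧ (Finset.univ.filter (fun n => n ≤ m ∧ p n = 1)).card ≤ i then 0 else p m

/-- `f_i^0(p)`: change the first `i` zeros of `p` (smallest positions) into ones. -/
def f0 (k i : ℕ) (p : Fin k → Fin 2) : Fin k → Fin 2 := fun m =>
  if p m = 0 ∧ (Finset.univ.filter (fun n => n ≤ m ∧ p n = 0)).card ≤ i then 1 else p m

/-- Coordinatewise complement of a binary tuple. -/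
def compl' (k : ℕ) (p : Fin k → Fin 2) : Fin k → Fin 2 := fun m => 1 - p m

/-- 1-based position of the `j`-th one of `p`. -/
noncomputable def pos1 (k j : ℕ) (p : Fin k → Fin 2) : ℕ :=
  sInf {m | ext' k p m = 1 ∧ ∑ i ∈ Finset.Icc 1 m, ext' k p i = j}

/-- 1-based position of the `j`-th zero of `p`. -/
noncomputable def pos0 (k j : ℕ) (p : Fin k → Fin 2) : ℕ :=
  sInf {m | 1 ≤ m ∧ m ≤ k ∧ ext' k p m = 0 ∧
    ∑ i ∈ Finset.Icc 1 m, (1 - ext' k p i) = j}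



/-- Partial sum of a binary tuple. -/
def Spart (k : ℕ) (p : Fin k → Fin 2) (n : ℕ) : ℕ := ∑ i ∈ Finset.Icc 1 n, ext' k p i

lemma ext'_le_one (k : ℕ) (p : Fin k → Fin 2) (i : ℕ) : ext' k p i ≤ 1 := by
  unfold ext'
  split
  · exact Nat.lt_succ_iff.mp (p _).isLt
  · exact Nat.zero_le 1

lemma ext'_zero (k : ℕ) (p : Fin k → Fin 2) {i : ℕ} (h : ¬(1 ≤ i ∧ i ≤ k)) :
    ext' k p i = 0 := dif_neg h

lemma ext'_one_bounds {k : ℕ} {p : Fin k → Fin 2} {m : ℕ} (h : ext' k p m = 1) :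
    1 ≤ m ∧ m ≤ k := by
  unfold ext' at h
  split at h
  · assumption
  · simp at h

lemma ext'_val (k : ℕ) (p : Fin k → Fin 2) (m : Fin k) :
    ext' k p ((m : ℕ) + 1) = (p m : ℕ) := by
  unfold ext'
  rw [dif_pos ⟨by omega, m.isLt⟩]
  congr 1

lemma Spart_zero (k : ℕ) (p : Fin k → Fin 2) : Spart k p 0 = 0 := by
  unfold Spart; simp

lemma Spart_step (k : ℕ) (p : Fin k → Fin 2) (n : ℕ) :
    Spart k p (n + 1) = Spart k p n + ext' k p (n + 1) :=
  Finset.sum_Icc_succ_top (by omega) _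

lemma Spart_mono (k : ℕ) (p : Fin k → Fin 2) {m n : ℕ} (h : m ≤ n) :
    Spart k p m ≤ Spart k p n :=
  Finset.sum_le_sum_of_subset (Finset.Icc_subset_Icc_right h)

lemma Spart_top (k : ℕ) (p : Fin k → Fin 2) : Spart k p k = onesCount k p := by
  unfold Spart onesCount
  rw [← Finset.Ico_add_one_right_eq_Icc, Finset.sum_Ico_eq_sum_range]
  simp only [Nat.add_sub_cancel, Nat.succ_sub_one]
  rw [← Fin.sum_univ_eq_sum_range (fun i => ext' k p (1 + i)) k]
  apply Finset.sum_congr rfl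
  intro m _
  rw [show 1 + (m : ℕ) = (m : ℕ) + 1 by omega, ext'_val]

lemma Spart_strict (k : ℕ) (p : Fin k → Fin 2) {m m' : ℕ} (h : m < m')
    (h1 : ext' k p m' = 1) : Spart k p m < Spart k p m' := by
  obtain ⟨h2, h3⟩ := ext'_one_bounds h1
  obtain ⟨n, rfl⟩ : ∃ n, m' = n + 1 := ⟨m' - 1, by omega⟩
  have hs := Spart_step k p n
  have hm := Spart_mono k p (show m ≤ n by omega)
  omega

lemma Spart_pos (k : ℕ) (p : Fin k → Fin 2) {m : ℕ} (h : ext' k p m = 1) :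
    1 ≤ Spart k p m := by
  have hb := ext'_one_bounds h
  have := Spart_strict k p (show 0 < m by omega) h
  have := Spart_zero k p
  omega

lemma exists_one (k : ℕ) (p : Fin k → Fin 2) (n i : ℕ) (h1 : 1 ≤ i)
    (h2 : i ≤ Spart k p n) : ∃ m, m ≤ n ∧ ext' k p m = 1 ∧ Spart k p m = i := by
  induction n with
  | zero => have := Spart_zero k p; omega
  | succ n ih =>
    by_cases h : i ≤ Spart k p n
    · obtain ⟨m, hm1, hm2⟩ := ih h
      exact ⟨m, by omega, hm2⟩
    · have hs := Spart_step k p n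
      have he := ext'_le_one k p (n + 1)
      exact ⟨n + 1, le_refl _, by omega, by omega⟩

lemma one_unique (k : ℕ) (p : Fin k → Fin 2) {m m' : ℕ}
    (h1 : ext' k p m = 1) (h2 : ext' k p m' = 1) (h3 : Spart k p m = Spart k p m') :
    m = m' := by
  rcases lt_trichotomy m m' with h | h | h
  · have := Spart_strict k p h h2; omega
  · exact h
  · have := Spart_strict k p h h1; omega

lemma pos1_eq (k : ℕ) (p : Fin k → Fin 2) {i m : ℕ} (hm : ext' k p m = 1)
    (hs : Spart k p m = i) : pos1 k i p = m := by
  have hset : {m' | ext' k p m' = 1 ∧ ∑ x ∈ Finset.Icc 1 m', ext' k p x = i} = {m} := by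
    ext m'
    simp only [Set.mem_setOf_eq, Set.mem_singleton_iff]
    constructor
    · rintro ⟨h1, h2⟩
      have h2' : Spart k p m' = i := h2
      rcases lt_trichotomy m m' with h | h | h
      · have := Spart_strict k p h h1; omega
      · exact h.symm
      · have := Spart_strict k p h hm; omega
    · rintro rfl; exact ⟨hm, hs⟩
  unfold pos1
  rw [hset]
  exact csInf_singleton m

lemma pos1_spec (k : ℕ) (p : Fin k → Fin 2) {i : ℕ} (h1 : 1 ≤ i)
    (h2 : i ≤ onesCount k p) :
    ext' k p (pos1 k i p) = 1 ∧ Spart k p (pos1 k i p) = i := by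
  obtain ⟨m, _, hm1, hm2⟩ := exists_one k p k i h1 (by rw [Spart_top]; exact h2)
  rw [pos1_eq k p hm1 hm2]; exact ⟨hm1, hm2⟩

lemma ones_agree (k s t : ℕ) (q q2 : Fin k → Fin 2)
    (hq2 : s ≤ onesCount k q2)
    (hSq : Spart k q t = s)
    (hpos : ∀ i, 1 ≤ i → i ≤ s → pos1 k i q = pos1 k i q2)
    {m : ℕ} (hmt : m ≤ t) (h1 : ext' k q m = 1) :
    ext' k q2 m = 1 := by
  have hi1 : 1 ≤ Spart k q m := Spart_pos k q h1
  have hi2 : Spart k q m ≤ s := hSq ▸ Spart_mono k q hmt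
  have he := pos1_eq k q h1 rfl
  have hp := hpos _ hi1 hi2
  obtain ⟨e1, e2⟩ := pos1_spec k q2 hi1 (le_trans hi2 hq2)
  rw [← hp, he] at e1
  exact e1

lemma sum_split {M : Type*} [AddCommMonoid M] (f : ℕ → M) {t k : ℕ} (h : t ≤ k) :
    ∑ i ∈ Finset.Icc 1 k, f i =
      (∑ i ∈ Finset.Icc 1 t, f i) + ∑ i ∈ Finset.Icc (t + 1) k, f i := by
  have hu : Finset.Icc 1 k = Finset.Icc 1 t ∪ Finset.Icc (t + 1) k := by
    ext x; simp only [Finset.mem_union, Finset.mem_Icc]; omega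
  rw [hu, Finset.sum_union]
  intro a ha hb
  simp only [Finset.le_eq_subset, Finset.bot_eq_empty] at *
  intro x hx
  exfalso
  have h1 := ha hx
  have h2 := hb hx
  simp only [Finset.mem_Icc] at h1 h2
  omega

lemma telescope (N : ℕ → ℕ) (t K : ℕ) (ht : t + 1 ≤ K)
    (hmono : ∀ i, t + 1 ≤ i → i < K → N (i + 1) ≤ N i) :
    ∑ j ∈ Finset.Icc (t + 1) K, (X : Polynomial ℤ) ^ (N j) *
      (if t + 1 < j then (1 - (X : Polynomial ℤ) ^ (N (j - 1) - N j)) else 1) =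
    (X : Polynomial ℤ) ^ (N K) := by
  induction K, ht using Nat.le_induction with
  | base =>
    rw [Finset.Icc_self, Finset.sum_singleton, if_neg (lt_irrefl _), mul_one]
  | succ K hK ih =>
    rw [Finset.sum_Icc_succ_top (by omega)]
    rw [ih (fun i a b => hmono i a (by omega))]
    have h1 : N (K + 1) ≤ N K := hmono K (by omega) (by omega)
    have h2 : (X : Polynomial ℤ) ^ (N (K + 1)) * (X : Polynomial ℤ) ^ (N K - N (K + 1))
        = (X : Polynomial ℤ) ^ (N K) := by
      rw [← pow_add]; congr 1; omega
    rw [if_pos (by omega), show K + 1 - 1 = K from rfl, mul_sub, mul_one, h2]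
    ring

open Matrix

open scoped Classical

def Qfun (k t : ℕ) (p' : Fin k → Fin 2) (j : ℕ) : Fin k → Fin 2 := fun m =>
  if (m : ℕ) + 1 ≤ t then p' m else if (m : ℕ) + 1 = j then 1 else 0

/-- Equation (lem_0_eq2): summing `l¹_{p''} δ¹_{p''}` over the class of `p'`
(tuples with `s+1` ones sharing the positions of the first `s` ones with `p'`)
gives `l¹_p δ¹_p q^{N_{1,k}}`, where `p` is `p'` with its last coordinate set to `0`. -/
theorem stmt17 (k s : ℕ) (hk : 1 ≤ k) (N1 : ℕ → ℕ)
    (hN1 : ∀ i, 1 ≤ i → i ≤ k → N1 (i + 1) ≤ N1 i)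
    (hN1z : ∀ i, k < i → N1 i = 0)
    (p' : Fin k → Fin 2) (hp1 : onesCount k p' = s + 1) (hpk : ext' k p' k = 1) :
    ∑ p'' ∈ Finset.univ.filter
        (fun p'' : Fin k → Fin 2 => onesCount k p'' = s + 1 ∧
          ∀ i ∈ Finset.Icc 1 s, pos1 k i p'' = pos1 k i p'),
      lTerm k N1 p'' * deltaR k N1 p'' =
    lTerm k N1 (fun m => if (m : ℕ) + 1 = k then 0 else p' m) *
      deltaR k N1 (fun m => if (m : ℕ) + 1 = k then 0 else p' m) *
      Polynomial.X ^ N1 k := by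
  classical
  set p : Fin k → Fin 2 := fun m => if (m : ℕ) + 1 = k then 0 else p' m with hpdef
  set t := pos1 k s p' with htdef
  have hSk : Spart k p' k = s + 1 := by rw [Spart_top, hp1]
  have hkk : k = (k - 1) + 1 := by omega
  have hSk1 : Spart k p' (k - 1) = s := by
    have hst := Spart_step k p' (k - 1)
    rw [← hkk] at hst
    omega
  -- facts about t
  have ht0 : s = 0 → t = 0 := by
    intro hs
    rw [htdef, hs]
    unfold pos1
    have hemp : {m | ext' k p' m = 1 ∧ ∑ i ∈ Finset.Icc 1 m, ext' k p' i = 0} = ∅ := by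
      ext m
      simp only [Set.mem_setOf_eq, Set.mem_empty_iff_false, iff_false, not_and]
      intro h1 h2
      have h3 : 1 ≤ Spart k p' m := Spart_pos k p' h1
      have h4 : Spart k p' m = 0 := h2
      omega
    rw [hemp, Nat.sInf_empty]
  have htfacts : Spart k p' t = s ∧ t ≤ k - 1 ∧ (1 ≤ s → ext' k p' t = 1 ∧ 1 ≤ t) := by
    rcases Nat.eq_zero_or_pos s with hs | hs
    · rw [ht0 hs, hs]
      exact ⟨Spart_zero k p', by omega, by omega⟩
    · obtain ⟨h1, h2⟩ := pos1_spec k p' hs (by rw [hp1]; omega)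
      obtain ⟨h3, h4⟩ := ext'_one_bounds h1
      refine ⟨h2, ?_, fun _ => ⟨h1, h3⟩⟩
      by_contra hc
      have hteq : pos1 k s p' = k := by omega
      rw [hteq] at h2
      omega
  obtain ⟨hSt, htk1, hts⟩ := htfacts
  have hzero : ∀ i, t < i → i ≤ k - 1 → ext' k p' i = 0 := by
    intro i h1 h2
    have h3 := ext'_le_one k p' i
    by_contra hc
    have h4 : ext' k p' i = 1 := by omega
    have h5 := Spart_strict k p' h1 h4
    have h6 := Spart_mono k p' h2
    omega
  -- value of p
  have hP : ∀ i, ext' k p i = if 1 ≤ i ∧ i ≤ t then ext' k p' i else 0 := by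
    intro i
    by_cases hi : 1 ≤ i ∧ i ≤ k
    · have e1 : ext' k p i = ((p ⟨i - 1, by omega⟩ : Fin 2) : ℕ) := dif_pos hi
      have e2 : p ⟨i - 1, by omega⟩ =
          if (i - 1) + 1 = k then (0 : Fin 2) else p' ⟨i - 1, by omega⟩ := rfl
      have e3 : ext' k p' i = ((p' ⟨i - 1, by omega⟩ : Fin 2) : ℕ) := dif_pos hi
      rw [e1, e2]
      by_cases hik : i = k
      · rw [if_pos (by omega), if_neg (by omega)]; rfl
      · rw [if_neg (by omega)]
        by_cases hit : i ≤ t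
        · rw [if_pos ⟨hi.1, hit⟩]
          exact e3.symm
        · rw [if_neg (show ¬(1 ≤ i ∧ i ≤ t) by omega)]
          have hz := hzero i (by omega) (by omega)
          rw [e3] at hz
          exact hz
    · rw [ext'_zero k p hi, if_neg (by omega)]
  -- value of Q j
  have hQ : ∀ j, t + 1 ≤ j → j ≤ k → ∀ i,
      ext' k (Qfun k t p' j) i =
        if 1 ≤ i ∧ i ≤ t then ext' k p' i else if i = j then 1 else 0 := by
    intro j hj1 hj2 i
    by_cases hi : 1 ≤ i ∧ i ≤ k
    · have e1 : ext' k (Qfun k t p' j) i =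
          ((Qfun k t p' j ⟨i - 1, by omega⟩ : Fin 2) : ℕ) := dif_pos hi
      have e2 : Qfun k t p' j ⟨i - 1, by omega⟩ =
          if (i - 1) + 1 ≤ t then p' ⟨i - 1, by omega⟩
          else if (i - 1) + 1 = j then (1 : Fin 2) else 0 := rfl
      have e3 : ext' k p' i = ((p' ⟨i - 1, by omega⟩ : Fin 2) : ℕ) := dif_pos hi
      rw [e1, e2]
      by_cases hit : i ≤ t
      · rw [if_pos (show (i - 1) + 1 ≤ t by omega), if_pos ⟨hi.1, hit⟩]
        exact e3.symm
      · rw [if_neg (show ¬((i - 1) + 1 ≤ t) by omega),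
          if_neg (show ¬(1 ≤ i ∧ i ≤ t) by omega)]
        by_cases hij : i = j
        · rw [if_pos (show (i - 1) + 1 = j by omega), if_pos hij]; rfl
        · rw [if_neg (show ¬((i - 1) + 1 = j) by omega), if_neg hij]; rfl
    · rw [ext'_zero _ _ hi, if_neg (by omega), if_neg (by omega)]
  have hQS : ∀ j, t + 1 ≤ j → j ≤ k → ∀ n, n ≤ t →
      Spart k (Qfun k t p' j) n = Spart k p' n := by
    intro j hj1 hj2 n hn
    apply Finset.sum_congr rfl
    intro i hi
    simp only [Finset.mem_Icc] at hi
    rw [hQ j hj1 hj2 i, if_pos ⟨hi.1, by omega⟩]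
  have honesQ : ∀ j, t + 1 ≤ j → j ≤ k → onesCount k (Qfun k t p' j) = s + 1 := by
    intro j hj1 hj2
    rw [← Spart_top]
    have e : Spart k (Qfun k t p' j) k =
        Spart k (Qfun k t p' j) t + ∑ i ∈ Finset.Icc (t + 1) k, ext' k (Qfun k t p' j) i :=
      sum_split _ (by omega)
    have h2 : ∑ i ∈ Finset.Icc (t + 1) k, ext' k (Qfun k t p' j) i = 1 := by
      have hc : ∀ i ∈ Finset.Icc (t + 1) k,
          ext' k (Qfun k t p' j) i = if i = j then 1 else 0 := by
        intro i hi
        simp only [Finset.mem_Icc] at hi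
        rw [hQ j hj1 hj2 i, if_neg (by omega)]
      rw [Finset.sum_congr rfl hc, Finset.sum_ite_eq' _ j (fun _ => 1),
        if_pos (Finset.mem_Icc.mpr ⟨hj1, hj2⟩)]
    rw [hQS j hj1 hj2 t le_rfl] at e
    omega
  have hposQ : ∀ j, t + 1 ≤ j → j ≤ k → ∀ i ∈ Finset.Icc 1 s,
      pos1 k i (Qfun k t p' j) = pos1 k i p' := by
    intro j hj1 hj2 i hi
    simp only [Finset.mem_Icc] at hi
    obtain ⟨h1, h2⟩ := pos1_spec k p' hi.1 (by rw [hp1]; omega)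
    have hmt : pos1 k i p' ≤ t := by
      by_contra h
      have := Spart_strict k p' (show t < pos1 k i p' by omega) h1
      omega
    have hm1 : 1 ≤ pos1 k i p' := (ext'_one_bounds h1).1
    apply pos1_eq
    · rw [hQ j hj1 hj2 _, if_pos ⟨hm1, hmt⟩]; exact h1
    · rw [hQS j hj1 hj2 _ hmt]; exact h2
  -- the class is the image of Qfun
  have hset : Finset.univ.filter
      (fun p'' : Fin k → Fin 2 => onesCount k p'' = s + 1 ∧
        ∀ i ∈ Finset.Icc 1 s, pos1 k i p'' = pos1 k i p') =
      (Finset.Icc (t + 1) k).image (Qfun k t p') := by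
    ext p''
    simp only [Finset.mem_filter, Finset.mem_univ, true_and, Finset.mem_image]
    constructor
    · rintro ⟨hc, hpos⟩
      have hSt'' : Spart k p'' t = s := by
        rcases Nat.eq_zero_or_pos s with hs | hs
        · rw [ht0 hs, hs]; exact Spart_zero k p''
        · have hp := hpos s (Finset.mem_Icc.mpr ⟨hs, le_rfl⟩)
          obtain ⟨e1, e2⟩ := pos1_spec k p'' hs (by rw [hc]; omega)
          rw [hp] at e2
          exact e2
      have hiff : ∀ m, 1 ≤ m → m ≤ t → ext' k p'' m = ext' k p' m := by
        intro m h1 h2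
        have a1 := ext'_le_one k p'' m
        have a2 := ext'_le_one k p' m
        by_cases hc1 : ext' k p' m = 1
        · rw [ones_agree k s t p' p'' (by rw [hc]; omega) hSt
            (fun i u v => (hpos i (Finset.mem_Icc.mpr ⟨u, v⟩)).symm) h2 hc1, hc1]
        · by_cases hc2 : ext' k p'' m = 1
          · exact absurd (ones_agree k s t p'' p' (by rw [hp1]; omega) hSt''
              (fun i u v => hpos i (Finset.mem_Icc.mpr ⟨u, v⟩)) h2 hc2) hc1
          · omega
      obtain ⟨j, hjk, hj1, hj2⟩ := exists_one k p'' k (s + 1) (by omega)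
        (by rw [Spart_top, hc])
      have hjt : t < j := by
        by_contra h
        have := Spart_mono k p'' (show j ≤ t by omega)
        omega
      refine ⟨j, Finset.mem_Icc.mpr ⟨by omega, hjk⟩, ?_⟩
      funext m
      apply Fin.val_injective
      have goal : ext' k (Qfun k t p' j) ((m : ℕ) + 1) = ext' k p'' ((m : ℕ) + 1) := by
        rw [hQ j (by omega) hjk ((m : ℕ) + 1)]
        by_cases h1 : (m : ℕ) + 1 ≤ t
        · rw [if_pos ⟨by omega, h1⟩]
          exact (hiff _ (by omega) h1).symm
        · rw [if_neg (by omega)]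
          by_cases h2 : (m : ℕ) + 1 = j
          · rw [if_pos h2]
            rw [h2]
            exact hj1.symm
          · rw [if_neg h2]
            have a1 := ext'_le_one k p'' ((m : ℕ) + 1)
            by_contra hcc
            have h3 : ext' k p'' ((m : ℕ) + 1) = 1 := by omega
            have h4 := Spart_strict k p'' (show t < (m : ℕ) + 1 by omega) h3
            have h5 := Spart_mono k p'' (show (m : ℕ) + 1 ≤ k from m.isLt)
            rw [Spart_top, hc] at h5
            have h6 : Spart k p'' ((m : ℕ) + 1) = s + 1 := by omega
            have := one_unique k p'' h3 hj1 (by omega)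
            omega
      rw [ext'_val, ext'_val] at goal
      exact goal
    · rintro ⟨j, hj, rfl⟩
      rw [Finset.mem_Icc] at hj
      exact ⟨honesQ j hj.1 hj.2, hposQ j hj.1 hj.2⟩
  -- injectivity
  have hinj : ∀ a ∈ Finset.Icc (t + 1) k, ∀ b ∈ Finset.Icc (t + 1) k,
      Qfun k t p' a = Qfun k t p' b → a = b := by
    intro a ha b hb hab
    simp only [Finset.mem_Icc] at ha hb
    have h2 := hQ a ha.1 ha.2 a
    have h1 := hQ b hb.1 hb.2 a
    have he : ext' k (Qfun k t p' a) a = ext' k (Qfun k t p' b) a := by rw [hab]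
    rw [h1, h2] at he
    rw [if_neg (show ¬(1 ≤ a ∧ a ≤ t) by omega),
      if_neg (show ¬(1 ≤ a ∧ a ≤ t) by omega), if_pos rfl] at he
    by_contra hne
    rw [if_neg hne] at he
    omega
  -- lTerm of Q j
  set C := ∑ i ∈ Finset.Icc 1 t, ext' k p' i * N1 i with hC
  have hl : ∀ j, t + 1 ≤ j → j ≤ k →
      lTerm k N1 (Qfun k t p' j) = X ^ C * X ^ N1 j := by
    intro j hj1 hj2
    unfold lTerm
    rw [← pow_add]
    congr 1
    rw [sum_split _ (show t ≤ k by omega)]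
    congr 1
    · apply Finset.sum_congr rfl
      intro i hi
      simp only [Finset.mem_Icc] at hi
      rw [hQ j hj1 hj2 i, if_pos ⟨hi.1, hi.2⟩]
    · have hc : ∀ i ∈ Finset.Icc (t + 1) k,
          ext' k (Qfun k t p' j) i * N1 i = if i = j then N1 i else 0 := by
        intro i hi
        simp only [Finset.mem_Icc] at hi
        rw [hQ j hj1 hj2 i, if_neg (by omega)]
        split_ifs <;> simp
      rw [Finset.sum_congr rfl hc, Finset.sum_ite_eq' _ j _,
        if_pos (Finset.mem_Icc.mpr ⟨hj1, hj2⟩)]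
  -- lTerm of p
  have hlp : lTerm k N1 p = X ^ C := by
    unfold lTerm
    congr 1
    rw [sum_split _ (show t ≤ k by omega)]
    have h1 : ∑ i ∈ Finset.Icc 1 t, ext' k p i * N1 i = C := by
      apply Finset.sum_congr rfl
      intro i hi
      simp only [Finset.mem_Icc] at hi
      rw [hP i, if_pos ⟨hi.1, hi.2⟩]
    have h2 : ∑ i ∈ Finset.Icc (t + 1) k, ext' k p i * N1 i = 0 := by
      apply Finset.sum_eq_zero
      intro i hi
      simp only [Finset.mem_Icc] at hi
      rw [hP i, if_neg (by omega), zero_mul]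
    rw [h1, h2, add_zero]
  -- condition comparison
  have hcomp : ∀ j, t + 1 ≤ j → j ≤ k → ∀ i, 1 ≤ i → i ≤ k → i + 1 ≠ j →
      ((ext' k (Qfun k t p' j) i = 0 ∧ ext' k (Qfun k t p' j) (i + 1) = 1) ↔
       (ext' k p i = 0 ∧ ext' k p (i + 1) = 1)) := by
    intro j hj1 hj2 i hi1 hik hij
    rw [hQ j hj1 hj2 i, hQ j hj1 hj2 (i + 1), hP i, hP (i + 1)]
    have e1 := ext'_le_one k p' i
    have e2 := ext'_le_one k p' (i + 1)
    split_ifs <;> first | omega | simp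
  -- deltaR of Q j
  have hdelta : ∀ j, t + 1 ≤ j → j ≤ k →
      deltaR k N1 (Qfun k t p' j) = deltaR k N1 p *
        (if t + 1 < j then (1 - (X : Polynomial ℤ) ^ (N1 (j - 1) - N1 j)) else 1) := by
    intro j hj1 hj2
    by_cases hj : t + 1 < j
    · rw [if_pos hj]
      unfold deltaR
      have hjm : j - 1 ∈ Finset.Icc 1 k := Finset.mem_Icc.mpr ⟨by omega, by omega⟩
      rw [← Finset.mul_prod_erase _ _ hjm, ← Finset.mul_prod_erase _
        (fun i => (1 - if ext' k p i = 0 ∧ ext' k p (i + 1) = 1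
          then (X : Polynomial ℤ) ^ (N1 i - N1 (i + 1)) else 0)) hjm]
      have hfQ : (1 - if ext' k (Qfun k t p' j) (j - 1) = 0 ∧
            ext' k (Qfun k t p' j) (j - 1 + 1) = 1
          then (X : Polynomial ℤ) ^ (N1 (j - 1) - N1 (j - 1 + 1)) else 0) =
          1 - (X : Polynomial ℤ) ^ (N1 (j - 1) - N1 j) := by
        have h1 : ext' k (Qfun k t p' j) (j - 1) = 0 := by
          rw [hQ j hj1 hj2 (j - 1), if_neg (by omega), if_neg (by omega)]
        have h2 : ext' k (Qfun k t p' j) (j - 1 + 1) = 1 := by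
          rw [show j - 1 + 1 = j by omega, hQ j hj1 hj2 j, if_neg (by omega), if_pos rfl]
        rw [if_pos ⟨h1, h2⟩, show j - 1 + 1 = j by omega]
      have hfP : (1 - if ext' k p (j - 1) = 0 ∧ ext' k p (j - 1 + 1) = 1
          then (X : Polynomial ℤ) ^ (N1 (j - 1) - N1 (j - 1 + 1)) else 0) = 1 := by
        rw [if_neg ?_, sub_zero]
        rintro ⟨_, h2⟩
        rw [hP (j - 1 + 1), if_neg (by omega)] at h2
        omega
      rw [hfQ, hfP, one_mul]
      have hrest : ∀ i ∈ (Finset.Icc 1 k).erase (j - 1),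
          (1 - if ext' k (Qfun k t p' j) i = 0 ∧ ext' k (Qfun k t p' j) (i + 1) = 1
            then (X : Polynomial ℤ) ^ (N1 i - N1 (i + 1)) else 0) =
          (1 - if ext' k p i = 0 ∧ ext' k p (i + 1) = 1
            then (X : Polynomial ℤ) ^ (N1 i - N1 (i + 1)) else 0) := by
        intro i hi
        have hine := Finset.ne_of_mem_erase hi
        have hi' := Finset.mem_of_mem_erase hi
        simp only [Finset.mem_Icc] at hi'
        have hcm := hcomp j hj1 hj2 i hi'.1 hi'.2 (by omega)
        by_cases hcond : ext' k p i = 0 ∧ ext' k p (i + 1) = 1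
        · rw [if_pos hcond, if_pos (hcm.mpr hcond)]
        · rw [if_neg hcond, if_neg (fun hh => hcond (hcm.mp hh))]
      rw [Finset.prod_congr rfl hrest]
      ring
    · rw [if_neg hj, mul_one]
      unfold deltaR
      apply Finset.prod_congr rfl
      intro i hi
      simp only [Finset.mem_Icc] at hi
      by_cases hij : i + 1 = j
      · have hit : i = t := by omega
        have hs1 : 1 ≤ s := by
          by_contra h
          have := ht0 (by omega)
          omega
        have h1 : ext' k (Qfun k t p' j) i = 1 := by
          rw [hit, hQ j hj1 hj2 t, if_pos ⟨by omega, le_rfl⟩]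
          exact (hts hs1).1
        have h2 : ext' k p (i + 1) = 0 := by
          rw [hP, if_neg (by omega)]
        rw [if_neg (by rw [h1]; simp), if_neg (by rw [h2]; simp)]
      · have hcm := hcomp j hj1 hj2 i hi.1 hi.2 hij
        by_cases hcond : ext' k p i = 0 ∧ ext' k p (i + 1) = 1
        · rw [if_pos hcond, if_pos (hcm.mpr hcond)]
        · rw [if_neg hcond, if_neg (fun hh => hcond (hcm.mp hh))]
  -- assemble
  rw [hset, Finset.sum_image hinj]
  have hsummand : ∀ j ∈ Finset.Icc (t + 1) k,
      lTerm k N1 (Qfun k t p' j) * deltaR k N1 (Qfun k t p' j) =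
      (X ^ C * deltaR k N1 p) * ((X : Polynomial ℤ) ^ N1 j *
        (if t + 1 < j then (1 - (X : Polynomial ℤ) ^ (N1 (j - 1) - N1 j)) else 1)) := by
    intro j hj
    simp only [Finset.mem_Icc] at hj
    rw [hl j hj.1 hj.2, hdelta j hj.1 hj.2]
    ring
  rw [Finset.sum_congr rfl hsummand, ← Finset.mul_sum,
    telescope N1 t k (by omega) (fun i u v => hN1 i (by omega) (by omega)), hlp]
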